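/- Ordering of compound information rates: let Z be a compound random sequence with nonempty state set S, and assume that cinf(Z), wsup(Z), inf_{s∈S} psup(Z,s), sup_{s∈S} psup(Z,s), and csup(Z) are all finite. Then cinf(Z) ≤ wsup(Z) ≤ inf_{s∈S} psup(Z,s) ≤ sup_{s∈S} psup(Z,s) ≤ csup(Z). -/

import Mathlib

open Filter MeasureTheory

noncomputable section

/-- The set whose supremum is the compound infimum `cinf`. -/
def cinfSet {S : Type*} (μ : ℕ → S → Measure ℝ) : Set ℝ :=
  {R : ℝ | Tendsto (fun n => ⨆ s : S, μ n s {x : ℝ | x ≤ R}) atTop (nhds 0)}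

/-- The compound infimum. -/
def cinf {S : Type*} (μ : ℕ → S → Measure ℝ) : ℝ := sSup (cinfSet μ)

/-- The set whose infimum is the compound supremum `csup`. -/
def csupSet {S : Type*} (μ : ℕ → S → Measure ℝ) : Set ℝ :=
  {R : ℝ | Tendsto (fun n => ⨆ s : S, μ n s {x : ℝ | R ≤ x}) atTop (nhds 0)}

/-- The compound supremum. -/
def csup {S : Type*} (μ : ℕ → S → Measure ℝ) : ℝ := sInf (csupSet μ)

/-- The set whose infimum is the per-state sup-limit `psup` of state `s`. -/
def psupSet {S : Type*} (μ : ℕ → S → Measure ℝ) (s : S) : Set ℝ :=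
  {R : ℝ | Tendsto (fun n => μ n s {x : ℝ | R ≤ x}) atTop (nhds 0)}

/-- The per-state sup-limit. -/
def psup {S : Type*} (μ : ℕ → S → Measure ℝ) (s : S) : ℝ := sInf (psupSet μ s)

/-- The set whose infimum is the worst-case sup-limit `wsup`. -/
def wsupSet {S : Type*} (μ : ℕ → S → Measure ℝ) : Set ℝ :=
  {R : ℝ | Tendsto (fun n => ⨅ s : S, μ n s {x : ℝ | R < x}) atTop (nhds 0)}

/-- The worst-case sup-limit. -/
def wsup {S : Type*} (μ : ℕ → S → Measure ℝ) : ℝ := sInf (wsupSet μ)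

/-- ordering of the compound information rates:
`cinf(Z) ≤ wsup(Z) ≤ inf_s psup(Z,s) ≤ sup_s psup(Z,s) ≤ csup(Z)`,
assuming all these quantities are finite. -/
theorem compound_rates_ordering {S : Type*} [Nonempty S] (μ : ℕ → S → Measure ℝ)
    (hprob : ∀ n s, IsProbabilityMeasure (μ n s))
    (hc₁ : (cinfSet μ).Nonempty) (hc₂ : BddAbove (cinfSet μ))
    (hw₁ : (wsupSet μ).Nonempty) (hw₂ : BddBelow (wsupSet μ))
    (hp₁ : ∀ s, (psupSet μ s).Nonempty) (hp₂ : ∀ s, BddBelow (psupSet μ s))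
    (hp₃ : BddBelow (Set.range fun s => psup μ s))
    (hp₄ : BddAbove (Set.range fun s => psup μ s))
    (hs₁ : (csupSet μ).Nonempty) (hs₂ : BddBelow (csupSet μ)) :
    cinf μ ≤ wsup μ ∧ wsup μ ≤ (⨅ s : S, psup μ s) ∧
      (⨅ s : S, psup μ s) ≤ (⨆ s : S, psup μ s) ∧ (⨆ s : S, psup μ s) ≤ csup μ := by
  have key : ∀ R ∈ cinfSet μ, ∀ R' ∈ wsupSet μ, R ≤ R' := by
    intro R hR R' hR'
    by_contra hlt
    push_neg at hlt
    obtain ⟨N1, hN1⟩ := (ENNReal.tendsto_atTop_zero.1 hR) (1/2) (by norm_num)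
    obtain ⟨N3, hN3⟩ := (ENNReal.tendsto_atTop_zero.1 hR') (1/4) (by norm_num)
    set m := max N1 N3
    have hA' : (⨆ s : S, μ m s {x : ℝ | x ≤ R}) ≤ 1/2 := hN1 m (le_max_left _ _)
    have hB' : (⨅ s : S, μ m s {x : ℝ | R' < x}) ≤ 1/4 := hN3 m (le_max_right _ _)
    have hlow' : ∀ s : S, (1/2 : ENNReal) ≤ μ m s {x : ℝ | R' < x} := by
      intro s
      have hs : μ m s {x : ℝ | x ≤ R} ≤ 1/2 := le_trans (le_iSup (fun s' => μ m s' {x : ℝ | x ≤ R}) s) hA'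
      have hcov : (1 : ENNReal) ≤ μ m s {x : ℝ | x ≤ R} + μ m s {x : ℝ | R' < x} := by
        have := hprob m s
        have huniv : (Set.univ : Set ℝ) ⊆ {x : ℝ | x ≤ R} ∪ {x : ℝ | R' < x} := by
          intro x _
          rcases le_or_gt x R with h | h
          · exact Or.inl h
          · exact Or.inr (lt_trans hlt h)
        calc (1 : ENNReal) = μ m s Set.univ := (measure_univ).symm
          _ ≤ μ m s ({x : ℝ | x ≤ R} ∪ {x : ℝ | R' < x}) := measure_mono huniv
          _ ≤ _ := measure_union_le _ _
      by_contra hc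
      push_neg at hc
      have hlt1 : (1 : ENNReal) < 1/2 + 1/2 :=
        lt_of_le_of_lt hcov (ENNReal.add_lt_add_of_le_of_lt (by norm_num) hs hc)
      simp [ENNReal.inv_two_add_inv_two] at hlt1
    have hge : (1/2 : ENNReal) ≤ ⨅ s : S, μ m s {x : ℝ | R' < x} := le_iInf hlow'
    have hbad : (1/2 : ENNReal) ≤ 1/4 := le_trans hge hB'
    norm_num at hbad
  have step1 : cinf μ ≤ wsup μ := by
    apply le_csInf hw₁
    intro R' hR'
    exact csSup_le hc₁ (fun R hR => key R hR R' hR')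
  have psub : ∀ s : S, psupSet μ s ⊆ wsupSet μ := by
    intro s R hR
    have hle : ∀ n, (⨅ s' : S, μ n s' {x : ℝ | R < x}) ≤ μ n s {x : ℝ | R ≤ x} := by
      intro n
      exact le_trans (iInf_le _ s) (measure_mono (fun x hx => show R ≤ x from le_of_lt hx))
    exact tendsto_of_tendsto_of_tendsto_of_le_of_le tendsto_const_nhds hR
      (fun n => zero_le) hle
  have step2 : wsup μ ≤ ⨅ s : S, psup μ s := by
    apply le_ciInf
    intro s
    apply le_csInf (hp₁ s)
    intro R hR
    exact csInf_le hw₂ (psub s hR)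
  have step3 : (⨅ s : S, psup μ s) ≤ ⨆ s : S, psup μ s := by
    obtain ⟨s⟩ := ‹Nonempty S›
    exact le_trans (ciInf_le hp₃ s) (le_ciSup hp₄ s)
  have step4 : (⨆ s : S, psup μ s) ≤ csup μ := by
    apply ciSup_le
    intro s
    apply le_csInf hs₁
    intro R hR
    apply csInf_le (hp₂ s)
    have hle : ∀ n, μ n s {x : ℝ | R ≤ x} ≤ ⨆ s' : S, μ n s' {x : ℝ | R ≤ x} :=
      fun n => le_iSup (fun s' => μ n s' {x : ℝ | R ≤ x}) s
    exact tendsto_of_tendsto_of_tendsto_of_le_of_le tendsto_const_nhds hR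
      (fun n => zero_le) hle
  exact ⟨step1, step2, step3, step4⟩

end
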